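/- (Dwass.) Let ξ_1, …, ξ_n be independent identically distributed random variables taking values in the nonnegative integers, defined on a probability space. Then the probability that (ξ_1, …, ξ_n) forms the preorder degree sequence of a rooted ordered tree equals (1/n) times the probability that ∑_{i=1}^n ξ_i = n − 1; that is, P{∑_{i=1}^{t} ξ_i ≥ t for all 1 ≤ t < n, and ∑_{i=1}^n ξ_i = n − 1} = (1/n) P{∑_{i=1}^n ξ_i = n − 1}. -/

import Mathlib

open Finset
open Fin.NatCast

namespace DwassAux

variable (n : ℕ) [NeZero n]

def S (y : Fin n → ℕ) (t : ℕ) : ℤ :=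
  (∑ i ∈ Finset.range t, (y (i : Fin n) : ℤ)) - t

lemma sum_range_cast_rot (y : Fin n → ℕ) (a : ℕ) :
    ∑ i ∈ Finset.range n, (y ((a + i : ℕ) : Fin n) : ℤ) = ∑ j : Fin n, (y j : ℤ) := by
  rw [← Fin.sum_univ_eq_sum_range (fun i => (y ((a + i : ℕ) : Fin n) : ℤ)) n]
  have h : ∀ i : Fin n, ((a + (i : ℕ) : ℕ) : Fin n) = (a : Fin n) + i := by
    intro i
    push_cast [Fin.cast_val_eq_self]
    ring
  simp_rw [h]
  exact Equiv.sum_comp (Equiv.addLeft (a : Fin n)) (fun j => (y j : ℤ))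

lemma S_add_n (y : Fin n → ℕ) (hn : 1 ≤ n) (hsum : ∑ j : Fin n, y j = n - 1) (a : ℕ) :
    S n y (a + n) = S n y a - 1 := by
  have hZ : ∑ j : Fin n, (y j : ℤ) = (n : ℤ) - 1 := by
    have := congrArg (fun m : ℕ => (m : ℤ)) hsum
    push_cast [Nat.cast_sub hn] at this
    simpa using this
  have h1 := Finset.sum_range_add (fun i => (y (i : Fin n) : ℤ)) a n
  simp only [S, h1, sum_range_cast_rot n y a, hZ]
  push_cast
  ring

end DwassAux

namespace DwassAux

variable (n : ℕ) [NeZero n]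

lemma cycle_exists_unique (hn : 1 ≤ n) (y : Fin n → ℕ)
    (hsum : ∑ j : Fin n, y j = n - 1) :
    ∃! k : ℕ, k < n ∧ ∀ t : ℕ, 1 ≤ t → t < n → S n y k ≤ S n y (k + t) := by
  classical
  have hper := S_add_n n y hn hsum
  have hFne : ((Finset.range n).image (S n y)).Nonempty :=
    ⟨S n y 0, Finset.mem_image.2 ⟨0, Finset.mem_range.2 hn, rfl⟩⟩
  set m := ((Finset.range n).image (S n y)).min' hFne with hm
  have hmle : ∀ j, j < n → m ≤ S n y j := fun j hj =>
    Finset.min'_le _ _ (Finset.mem_image.2 ⟨j, Finset.mem_range.2 hj, rfl⟩)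
  have hex : ∃ k, k < n ∧ S n y k = m := by
    obtain ⟨j, hj, hje⟩ := Finset.mem_image.1 (Finset.min'_mem _ hFne)
    exact ⟨j, Finset.mem_range.1 hj, hje⟩
  set k := Nat.find hex with hkdef
  obtain ⟨hkn, hkm⟩ : k < n ∧ S n y k = m := Nat.find_spec hex
  have hstrict : ∀ j, j < k → m + 1 ≤ S n y j := by
    intro j hj
    have h1 : ¬(j < n ∧ S n y j = m) := Nat.find_min hex hj
    have h2 : j < n := lt_trans hj hkn
    have h3 : m ≤ S n y j := hmle j h2
    have h4 : S n y j ≠ m := fun h => h1 ⟨h2, h⟩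
    omega
  -- the key property holds for k
  have hkprop : ∀ t : ℕ, 1 ≤ t → t < n → S n y k ≤ S n y (k + t) := by
    intro t ht1 htn
    by_cases hc : k + t < n
    · rw [hkm]; exact hmle _ hc
    · have hj : k + t - n < k := by omega
      have heq : S n y (k + t) = S n y (k + t - n) - 1 := by
        have := hper (k + t - n)
        rwa [show k + t - n + n = k + t by omega] at this
      have h1 : m + 1 ≤ S n y (k + t - n) := hstrict _ hj
      rw [hkm]; omega
  -- no two distinct indices can both work
  have htwo : ∀ a b : ℕ, a < n → b < n →
      (∀ t : ℕ, 1 ≤ t → t < n → S n y a ≤ S n y (a + t)) →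
      (∀ t : ℕ, 1 ≤ t → t < n → S n y b ≤ S n y (b + t)) → a < b → False := by
    intro a b han hbn hap hbp hab
    have h1 : S n y a ≤ S n y b := by
      have := hap (b - a) (by omega) (by omega)
      rwa [show a + (b - a) = b by omega] at this
    have h2 : S n y b ≤ S n y (a + n) := by
      have := hbp (a + n - b) (by omega) (by omega)
      rwa [show b + (a + n - b) = a + n by omega] at this
    have h3 := hper a
    omega
  refine ⟨k, ⟨hkn, hkprop⟩, ?_⟩
  rintro k' ⟨hk'n, hk'p⟩
  rcases lt_trichotomy k' k with h | h | h
  · exact absurd (htwo k' k hk'n hkn hk'p hkprop h) (fun h => h)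
  · exact h
  · exact absurd (htwo k k' hkn hk'n hkprop hk'p h) (fun h => h)

end DwassAux

namespace DwassAux

variable (n : ℕ) [NeZero n]

def GoodP (y : Fin n → ℕ) : Prop :=
  (∀ t : ℕ, 1 ≤ t → t < n → t ≤ ∑ i ∈ Finset.range t, y (i : Fin n)) ∧
    ∑ i ∈ Finset.range n, y (i : Fin n) = n - 1

lemma rot_sum (y : Fin n → ℕ) (k : Fin n) :
    ∑ i ∈ Finset.range n, y ((i : Fin n) + k) = ∑ i ∈ Finset.range n, y (i : Fin n) := by
  rw [← Fin.sum_univ_eq_sum_range (fun i => y ((i : Fin n) + k)) n,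
      ← Fin.sum_univ_eq_sum_range (fun i => y (i : Fin n)) n]
  simp_rw [Fin.cast_val_eq_self]
  exact Equiv.sum_comp (Equiv.addRight k) y

lemma rot_partial (y : Fin n → ℕ) (k t : ℕ) :
    ∑ i ∈ Finset.range t, (y ((i : Fin n) + (k : Fin n)) : ℤ)
      = ∑ i ∈ Finset.range (k + t), (y (i : Fin n) : ℤ)
        - ∑ i ∈ Finset.range k, (y (i : Fin n) : ℤ) := by
  rw [Finset.sum_range_add (fun i => (y (i : Fin n) : ℤ)) k t]
  have h : ∀ i : ℕ, ((k + i : ℕ) : Fin n) = (i : Fin n) + (k : Fin n) := by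
    intro i; push_cast; exact add_comm _ _
  simp_rw [h]
  ring

lemma goodP_rot_iff (hn : 1 ≤ n) (y : Fin n → ℕ)
    (hsum : ∑ i ∈ Finset.range n, y (i : Fin n) = n - 1) (k : ℕ) :
    GoodP n (fun i => y (i + (k : Fin n))) ↔
      ∀ t : ℕ, 1 ≤ t → t < n → S n y k ≤ S n y (k + t) := by
  constructor
  · rintro ⟨h1, _⟩ t ht1 htn
    have := h1 t ht1 htn
    have hcast : (t : ℤ) ≤ ((∑ i ∈ Finset.range t, y ((i : Fin n) + (k : Fin n)) : ℕ) : ℤ) :=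
      Nat.cast_le.mpr this
    rw [Nat.cast_sum, rot_partial] at hcast
    simp only [S]
    push_cast at hcast ⊢
    omega
  · intro h
    constructor
    · intro t ht1 htn
      have := h t ht1 htn
      simp only [S] at this
      have hcast : (t : ℤ) ≤ ∑ i ∈ Finset.range t, (y ((i : Fin n) + (k : Fin n)) : ℤ) := by
        rw [rot_partial]
        omega
      rw [← Nat.cast_sum] at hcast
      exact Nat.cast_le.mp hcast
    · simpa [rot_sum n y (k : Fin n)] using hsum

lemma sum_of_goodP_rot (y : Fin n → ℕ) (k : Fin n)
    (h : GoodP n (fun i => y (i + k))) :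
    ∑ i ∈ Finset.range n, y (i : Fin n) = n - 1 := by
  have := h.2
  simpa [rot_sum n y k] using this

lemma key (hn : 1 ≤ n) (y : Fin n → ℕ)
    (hsum : ∑ i ∈ Finset.range n, y (i : Fin n) = n - 1) :
    ∃! k : Fin n, GoodP n (fun i => y (i + k)) := by
  have hsum' : ∑ j : Fin n, y j = n - 1 := by
    rw [← hsum, ← Fin.sum_univ_eq_sum_range (fun i => y (i : Fin n)) n]
    simp_rw [Fin.cast_val_eq_self]
  obtain ⟨k, ⟨hkn, hkp⟩, huniq⟩ := cycle_exists_unique n hn y hsum'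
  refine ⟨(k : Fin n), ?_, ?_⟩
  · exact (goodP_rot_iff n hn y hsum k).2 hkp
  · intro k' hk'
    have hk'2 : GoodP n (fun i => y (i + ((k'.val : ℕ) : Fin n))) := by
      rwa [Fin.cast_val_eq_self]
    have := (goodP_rot_iff n hn y hsum k'.val).1 hk'2
    have heq : k'.val = k := huniq k'.val ⟨k'.isLt, this⟩
    rw [← heq, Fin.cast_val_eq_self]

end DwassAux

open MeasureTheory ProbabilityTheory

/-- Dwass: for i.i.d. ℕ-valued random variables
`ξ_0, …, ξ_{n-1}`, the probability that `(ξ_0, …, ξ_{n-1})` forms the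
preorder degree sequence of a rooted ordered tree equals `1/n` times the
probability that `∑ ξ_i = n − 1`. -/
theorem dwass_probability {Ω : Type*} [MeasurableSpace Ω] (μ : Measure Ω)
    [IsProbabilityMeasure μ] (n : ℕ) (hn : 1 ≤ n) (ξ : ℕ → Ω → ℕ)
    (hmeas : ∀ i, Measurable (ξ i))
    (hindep : iIndepFun ξ μ)
    (hident : ∀ i j, Measure.map (ξ i) μ = Measure.map (ξ j) μ) :
    μ {ω | (∀ t : ℕ, 1 ≤ t → t < n → t ≤ ∑ i ∈ Finset.range t, ξ i ω) ∧
        ∑ i ∈ Finset.range n, ξ i ω = n - 1} =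
      (n : ENNReal)⁻¹ * μ {ω | ∑ i ∈ Finset.range n, ξ i ω = n - 1} := by
  haveI : NeZero n := ⟨by omega⟩
  classical
  set ν := μ.map (ξ 0) with hν
  haveI : IsProbabilityMeasure ν := Measure.isProbabilityMeasure_map (hmeas 0).aemeasurable
  set X : Ω → (Fin n → ℕ) := fun ω i => ξ i ω with hX
  have hXmeas : Measurable X := measurable_pi_lambda _ fun i => hmeas i
  have hall : ∀ s : Set (Fin n → ℕ), MeasurableSet s := fun s =>
    s.to_countable.measurableSet
  have hallN : ∀ s : Set ℕ, MeasurableSet s := fun s => s.to_countable.measurableSet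
  have hmarg : ∀ (i : ℕ) (A : Set ℕ), μ (ξ i ⁻¹' A) = ν A := by
    intro i A
    rw [hν, hident 0 i, Measure.map_apply (hmeas i) (hallN A)]
  -- joint law is the product measure
  have hmapX : μ.map X = Measure.pi (fun _ : Fin n => ν) := by
    refine (Measure.pi_eq ?_).symm
    intro s _
    rw [Measure.map_apply hXmeas (hall _)]
    have hset : X ⁻¹' Set.pi Set.univ s
        = ⋂ i ∈ Finset.range n,
            ξ i ⁻¹' (if h : i < n then s ⟨i, h⟩ else Set.univ) := by
      ext ω
      simp only [Set.mem_preimage, Set.mem_pi, Set.mem_univ, true_implies,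
        Set.mem_iInter, Finset.mem_range]
      constructor
      · intro h j hj
        rw [dif_pos hj]
        exact h ⟨j, hj⟩
      · intro h i
        have := h i.val i.isLt
        rwa [dif_pos i.isLt, Fin.eta] at this
    rw [hset,
      hindep.measure_inter_preimage_eq_mul (Finset.range n)
        (fun i _ => hallN _)]
    have h1 : ∀ i ∈ Finset.range n,
        μ (ξ i ⁻¹' (if h : i < n then s ⟨i, h⟩ else Set.univ))
          = ν (if h : i < n then s ⟨i, h⟩ else Set.univ) :=
      fun i _ => hmarg i _
    rw [Finset.prod_congr rfl h1,
      ← Fin.prod_univ_eq_prod_range (fun i => ν (if h : i < n then s ⟨i, h⟩ else Set.univ)) n]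
    refine Finset.prod_congr rfl fun i _ => ?_
    rw [dif_pos i.isLt, Fin.eta]
  set π := Measure.pi (fun _ : Fin n => ν) with hπ
  set Good : Set (Fin n → ℕ) := {y | DwassAux.GoodP n y} with hGood
  set Sn : Set (Fin n → ℕ) := {y | ∑ i ∈ Finset.range n, y (i : Fin n) = n - 1} with hSn
  have hsums : ∀ (ω : Ω) (t : ℕ), t ≤ n →
      ∑ i ∈ Finset.range t, X ω ((i : ℕ) : Fin n) = ∑ i ∈ Finset.range t, ξ i ω := by
    intro ω t ht
    refine Finset.sum_congr rfl fun i hi => ?_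
    have hv : (((i : ℕ) : Fin n)).val = i :=
      Fin.val_cast_of_lt (lt_of_lt_of_le (Finset.mem_range.1 hi) ht)
    simp only [hX, hv]
  have hLHS : {ω | (∀ t : ℕ, 1 ≤ t → t < n → t ≤ ∑ i ∈ Finset.range t, ξ i ω) ∧
      ∑ i ∈ Finset.range n, ξ i ω = n - 1} = X ⁻¹' Good := by
    ext ω
    simp only [Set.mem_setOf_eq, Set.mem_preimage, hGood, DwassAux.GoodP]
    constructor
    · rintro ⟨h1, h2⟩
      exact ⟨fun t ht1 htn => by rw [hsums ω t htn.le]; exact h1 t ht1 htn,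
        by rw [hsums ω n le_rfl]; exact h2⟩
    · rintro ⟨h1, h2⟩
      exact ⟨fun t ht1 htn => by rw [← hsums ω t htn.le]; exact h1 t ht1 htn,
        by rw [← hsums ω n le_rfl]; exact h2⟩
  have hRHS : {ω | ∑ i ∈ Finset.range n, ξ i ω = n - 1} = X ⁻¹' Sn := by
    ext ω
    simp only [Set.mem_setOf_eq, Set.mem_preimage, hSn]
    rw [hsums ω n le_rfl]
  have hμL : μ {ω | (∀ t : ℕ, 1 ≤ t → t < n → t ≤ ∑ i ∈ Finset.range t, ξ i ω) ∧
      ∑ i ∈ Finset.range n, ξ i ω = n - 1} = π Good := by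
    rw [hLHS, ← Measure.map_apply hXmeas (hall _), hmapX]
  have hμR : μ {ω | ∑ i ∈ Finset.range n, ξ i ω = n - 1} = π Sn := by
    rw [hRHS, ← Measure.map_apply hXmeas (hall _), hmapX]
  -- rotation maps
  have hTmeas : ∀ k : Fin n, Measurable (fun (y : Fin n → ℕ) (i : Fin n) => y (i + k)) :=
    fun k => measurable_pi_lambda _ fun i => measurable_pi_apply _
  have hrot : ∀ k : Fin n,
      Measure.map (fun (y : Fin n → ℕ) (i : Fin n) => y (i + k)) π = π := by
    intro k
    refine (Measure.pi_eq ?_).symm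
    intro s _
    rw [Measure.map_apply (hTmeas k) (hall _)]
    have hpre : (fun (y : Fin n → ℕ) (i : Fin n) => y (i + k)) ⁻¹' Set.pi Set.univ s
        = Set.pi Set.univ (fun j => s (j - k)) := by
      ext y
      simp only [Set.mem_preimage, Set.mem_pi, Set.mem_univ, true_implies]
      constructor
      · intro h j
        have := h (j - k)
        rwa [sub_add_cancel] at this
      · intro h i
        have := h (i + k)
        rwa [add_sub_cancel_right] at this
    rw [hpre, Measure.pi_pi]
    exact Equiv.prod_comp (Equiv.subRight k) (fun j => ν (s j))
  have heach : ∀ k : Fin n,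
      π ((fun (y : Fin n → ℕ) (i : Fin n) => y (i + k)) ⁻¹' Good) = π Good := by
    intro k
    rw [← Measure.map_apply (hTmeas k) (hall Good), hrot k]
  -- decomposition
  have hdecomp : Sn = ⋃ k : Fin n,
      (fun (y : Fin n → ℕ) (i : Fin n) => y (i + k)) ⁻¹' Good := by
    ext y
    simp only [hSn, Set.mem_setOf_eq, Set.mem_iUnion, Set.mem_preimage, hGood]
    constructor
    · intro h
      obtain ⟨k, hk, -⟩ := DwassAux.key n hn y h
      exact ⟨k, hk⟩
    · rintro ⟨k, hk⟩
      exact DwassAux.sum_of_goodP_rot n y k hk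
  have hdisj : Pairwise (Function.onFun Disjoint
      fun k : Fin n => (fun (y : Fin n → ℕ) (i : Fin n) => y (i + k)) ⁻¹' Good) := by
    intro a b hab
    refine Set.disjoint_left.2 fun y hya hyb => hab ?_
    have hs : ∑ i ∈ Finset.range n, y (i : Fin n) = n - 1 :=
      DwassAux.sum_of_goodP_rot n y a hya
    obtain ⟨k, -, hu⟩ := DwassAux.key n hn y hs
    exact (hu a hya).trans (hu b hyb).symm
  have hcount : π Sn = (n : ENNReal) * π Good := by
    rw [hdecomp, measure_iUnion hdisj (fun k => hall _), tsum_fintype]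
    simp only [heach, Finset.sum_const, Finset.card_univ, Fintype.card_fin, nsmul_eq_mul]
  have hnz : (n : ENNReal) ≠ 0 := Nat.cast_ne_zero.2 (by omega)
  rw [hμL, hμR, hcount, ← mul_assoc,
    ENNReal.inv_mul_cancel hnz (ENNReal.natCast_ne_top n), one_mul]
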